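/- Let (B¹, i¹, j¹) be a framed representation on (V¹, W¹) and (B², i², j²) a framed representation on (V², W²), and suppose (B¹, i¹, j¹) is stable. Then β²¹ : E(V¹, V²) ⊕ L(W¹, V²) ⊕ L(V¹, W²) → L(V¹, V²) is surjective. -/

import Mathlib

/-!
Framed representations of a quiver attached to a finite graph without edge
loops, with vertex set `I` and edge set `Ω`, where the edge `e ∈ Ω` joins the
vertices `s e` and `t e`.  The set `H` of oriented edges is `Ω ⊕ Ω`: each
edge occurs with both orientations.  For an `I`-graded complex vector space
`V`, a datum `B ∈ E(V,V)` is encoded by its components `Bp e : V (s e) → V (t e)`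
(along `e` oriented from `s e` to `t e`) and `Bm e : V (t e) → V (s e)` (along
the reversed orientation); a datum in `L(V,W)` is a family of maps
`V k → W k`.
-/

noncomputable section

variable {I : Type*} {Ω : Type*}

/-- A framed representation `(B, i, j) ∈ E(V,V) ⊕ L(W,V) ⊕ L(V,W)` on the
pair `(V, W)` of `I`-graded vector spaces. -/
structure FramedRep (s t : Ω → I) (V W : I → Type*)
    [∀ k, AddCommGroup (V k)] [∀ k, Module ℂ (V k)]
    [∀ k, AddCommGroup (W k)] [∀ k, Module ℂ (W k)] where
  Bp : ∀ e, V (s e) →ₗ[ℂ] V (t e)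
  Bm : ∀ e, V (t e) →ₗ[ℂ] V (s e)
  i : ∀ k, W k →ₗ[ℂ] V k
  j : ∀ k, V k →ₗ[ℂ] W k

/-- Stability: the only `B`-invariant `I`-graded subspace `S ⊆ V` contained
in `Ker j` is `S = 0`. -/
def FramedRep.IsStable {s t : Ω → I} {V W : I → Type*}
    [∀ k, AddCommGroup (V k)] [∀ k, Module ℂ (V k)]
    [∀ k, AddCommGroup (W k)] [∀ k, Module ℂ (W k)]
    (R : FramedRep s t V W) : Prop :=
  ∀ S : ∀ k, Submodule ℂ (V k),
    (∀ e, ∀ x ∈ S (s e), R.Bp e x ∈ S (t e)) →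
    (∀ e, ∀ x ∈ S (t e), R.Bm e x ∈ S (s e)) →
    (∀ k, ∀ x ∈ S k, R.j k x = 0) →
    ∀ k, S k = ⊥

/-- Transport of graded components along an equality of vertices. -/
def lcast (V : I → Type*) [∀ k, AddCommGroup (V k)] [∀ k, Module ℂ (V k)]
    {a b : I} (h : a = b) : V a →ₗ[ℂ] V b := by
  subst h; exact LinearMap.id

section

variable {s t : Ω → I}
variable {V₁ W₁ V₂ W₂ : I → Type*}
  [∀ k, AddCommGroup (V₁ k)] [∀ k, Module ℂ (V₁ k)]
  [∀ k, AddCommGroup (W₁ k)] [∀ k, Module ℂ (W₁ k)]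
  [∀ k, AddCommGroup (V₂ k)] [∀ k, Module ℂ (V₂ k)]
  [∀ k, AddCommGroup (W₂ k)] [∀ k, Module ℂ (W₂ k)]

/-- The vanishing of the moment map, `μ(B,i,j) = εBB + ij = 0`: for every
vertex `k`, `∑_{h : in(h) = k} ε(h) B_h B_h̄ + i_k j_k = 0`, where the sum over
oriented edges `h` into `k` splits into the edges `e` with `t e = k` (with
sign `eps e`) and those with `s e = k` (with sign `−eps e`). -/
def FramedRep.MuZero [Fintype Ω] [DecidableEq I] (eps : Ω → ℂ)
    {V W : I → Type*}
    [∀ k, AddCommGroup (V k)] [∀ k, Module ℂ (V k)]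
    [∀ k, AddCommGroup (W k)] [∀ k, Module ℂ (W k)]
    (R : FramedRep s t V W) : Prop :=
  ∀ k : I,
    (∑ e : {e : Ω // t e = k},
        eps e.1 • (lcast V e.2 ∘ₗ R.Bp e.1 ∘ₗ R.Bm e.1 ∘ₗ lcast V e.2.symm))
    + (∑ e : {e : Ω // s e = k},
        (-eps e.1) • (lcast V e.2 ∘ₗ R.Bm e.1 ∘ₗ R.Bp e.1 ∘ₗ lcast V e.2.symm))
    + R.i k ∘ₗ R.j k = 0

/-- The space `E(V¹,V²) ⊕ L(W¹,V²) ⊕ L(V¹,W²)`, middle term of the complex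
`L(V¹,V²) → E(V¹,V²) ⊕ L(W¹,V²) ⊕ L(V¹,W²) → L(V¹,V²)`. -/
abbrev ELL (s t : Ω → I) (V₁ W₁ V₂ W₂ : I → Type*)
    [∀ k, AddCommGroup (V₁ k)] [∀ k, Module ℂ (V₁ k)]
    [∀ k, AddCommGroup (W₁ k)] [∀ k, Module ℂ (W₁ k)]
    [∀ k, AddCommGroup (V₂ k)] [∀ k, Module ℂ (V₂ k)]
    [∀ k, AddCommGroup (W₂ k)] [∀ k, Module ℂ (W₂ k)] : Type _ :=
  (∀ e, V₁ (s e) →ₗ[ℂ] V₂ (t e)) × (∀ e, V₁ (t e) →ₗ[ℂ] V₂ (s e)) ×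
  (∀ k, W₁ k →ₗ[ℂ] V₂ k) × (∀ k, V₁ k →ₗ[ℂ] W₂ k)

/-- The map `α²¹ : L(V¹,V²) → E(V¹,V²) ⊕ L(W¹,V²) ⊕ L(V¹,W²)`,
`α²¹(ξ) = (B²ξ − ξB¹, −ξi¹, j²ξ)`. -/
def alphaMap (R₁ : FramedRep s t V₁ W₁) (R₂ : FramedRep s t V₂ W₂)
    (ξ : ∀ k, V₁ k →ₗ[ℂ] V₂ k) : ELL s t V₁ W₁ V₂ W₂ :=
  ⟨fun e => R₂.Bp e ∘ₗ ξ (s e) - ξ (t e) ∘ₗ R₁.Bp e,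
   fun e => R₂.Bm e ∘ₗ ξ (t e) - ξ (s e) ∘ₗ R₁.Bm e,
   fun k => -(ξ k ∘ₗ R₁.i k),
   fun k => R₂.j k ∘ₗ ξ k⟩

/-- The `k`-th component of the map
`β²¹ : E(V¹,V²) ⊕ L(W¹,V²) ⊕ L(V¹,W²) → L(V¹,V²)`,
`β²¹(C,I,J)_k = ∑_{h : in(h)=k} ε(h)(B²_h C_h̄ + C_h B¹_h̄) + i²_k J_k + I_k j¹_k`,
where the sum over oriented edges `h` into `k` splits into the edges `e` with
`t e = k` (with sign `eps e`) and those with `s e = k` (with sign `−eps e`). -/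
def betaMap [Fintype Ω] [DecidableEq I] (eps : Ω → ℂ)
    (R₁ : FramedRep s t V₁ W₁) (R₂ : FramedRep s t V₂ W₂)
    (x : ELL s t V₁ W₁ V₂ W₂) (k : I) : V₁ k →ₗ[ℂ] V₂ k :=
  (∑ e : {e : Ω // t e = k},
      eps e.1 • (lcast V₂ e.2 ∘ₗ (R₂.Bp e.1 ∘ₗ x.2.1 e.1 + x.1 e.1 ∘ₗ R₁.Bm e.1)
        ∘ₗ lcast V₁ e.2.symm))
  + (∑ e : {e : Ω // s e = k},
      (-eps e.1) • (lcast V₂ e.2 ∘ₗ (R₂.Bm e.1 ∘ₗ x.1 e.1 + x.2.1 e.1 ∘ₗ R₁.Bp e.1)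
        ∘ₗ lcast V₁ e.2.symm))
  + R₂.i k ∘ₗ x.2.2.2 k + x.2.2.1 k ∘ₗ R₁.j k

end


open LinearMap Module

section auxTrace
variable {M N : Type*} [AddCommGroup M] [Module ℂ M] [FiniteDimensional ℂ M]
  [AddCommGroup N] [Module ℂ N] [FiniteDimensional ℂ N]


lemma trace_null (A : N →ₗ[ℂ] M)
    (h : ∀ X : M →ₗ[ℂ] N, trace ℂ M (A ∘ₗ X) = 0) : A = 0 := by
  by_contra hA
  obtain ⟨n, hn⟩ : ∃ n, A n ≠ 0 := by
    by_contra h'; push_neg at h'; exact hA (LinearMap.ext fun n => h' n)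
  obtain ⟨g, hg⟩ : ∃ g : Module.Dual ℂ M, g (A n) ≠ 0 := by
    by_contra h'; push_neg at h'
    exact hn ((Module.forall_dual_apply_eq_zero_iff ℂ (A n)).mp h')
  have key := h (g.smulRight n)
  have e1 : A ∘ₗ g.smulRight n = dualTensorHom ℂ M M (g ⊗ₜ[ℂ] (A n)) := by
    ext m; simp [dualTensorHom_apply]
  rw [e1, trace_eq_contract_apply, contractLeft_apply] at key
  exact hg key

/-- the trace pairing as a map to the dual -/
def tracePairing (M N : Type*) [AddCommGroup M] [Module ℂ M] [AddCommGroup N] [Module ℂ N] :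
    (N →ₗ[ℂ] M) →ₗ[ℂ] Module.Dual ℂ (M →ₗ[ℂ] N) where
  toFun A := trace ℂ M ∘ₗ llcomp ℂ M N M A
  map_add' A B := by ext X; simp
  map_smul' c A := by ext X; simp

lemma exists_trace_rep (φ : Module.Dual ℂ (M →ₗ[ℂ] N)) :
    ∃ A : N →ₗ[ℂ] M, ∀ X : M →ₗ[ℂ] N, φ X = trace ℂ M (A ∘ₗ X) := by
  have hinj : Function.Injective (tracePairing M N) := by
    rw [injective_iff_map_eq_zero]
    intro A hA
    exact trace_null A fun X => by
      exact (by simpa [tracePairing] using congrFun (congrArg DFunLike.coe hA) X :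
        trace ℂ M (llcomp ℂ M N M A X) = 0)
  have hfr : Module.finrank ℂ (N →ₗ[ℂ] M) = Module.finrank ℂ (Module.Dual ℂ (M →ₗ[ℂ] N)) := by
    rw [Subspace.dual_finrank_eq, Module.finrank_linearMap, Module.finrank_linearMap, mul_comm]
  obtain ⟨A, hA⟩ := (LinearMap.injective_iff_surjective_of_finrank_eq_finrank hfr).mp hinj φ
  exact ⟨A, fun X => by rw [← hA]; rfl⟩

end auxTrace

lemma lcast_rfl {V : I → Type*} [∀ k, AddCommGroup (V k)] [∀ k, Module ℂ (V k)]
    {a : I} (h : a = a) : lcast V h = LinearMap.id := rfl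

/-- Evaluating a sum over a subtype of edges when all but one term vanishes. -/
lemma sum_subtype_dite [DecidableEq I] {Ω : Type*} [Fintype Ω] {M : Type*} [AddCommGroup M]
    {f : Ω → I} (k : I) (e₀ : Ω)
    (T : ∀ e : Ω, f e = k → M)
    (hT : ∀ e h, e ≠ e₀ → T e h = 0) :
    (∑ e : {e : Ω // f e = k}, T e.1 e.2) = if h : f e₀ = k then T e₀ h else 0 := by
  by_cases h : f e₀ = k
  · rw [dif_pos h, Finset.sum_eq_single (⟨e₀, h⟩ : {e : Ω // f e = k})]
    · intro b _ hb
      exact hT b.1 b.2 (fun he => hb (Subtype.ext he))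
    · intro habs; exact absurd (Finset.mem_univ _) habs
  · rw [dif_neg h]
    exact Finset.sum_eq_zero fun e _ => hT e.1 e.2 (fun he => h (he ▸ e.2))

section betaLinear

variable {s t : Ω → I}
variable {V₁ W₁ V₂ W₂ : I → Type*}
  [∀ k, AddCommGroup (V₁ k)] [∀ k, Module ℂ (V₁ k)]
  [∀ k, AddCommGroup (W₁ k)] [∀ k, Module ℂ (W₁ k)]
  [∀ k, AddCommGroup (V₂ k)] [∀ k, Module ℂ (V₂ k)]
  [∀ k, AddCommGroup (W₂ k)] [∀ k, Module ℂ (W₂ k)]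

set_option maxHeartbeats 1000000 in
/-- `betaMap` bundled as a linear map. -/
def betaLin [Fintype Ω] [DecidableEq I] (eps : Ω → ℂ)
    (R₁ : FramedRep s t V₁ W₁) (R₂ : FramedRep s t V₂ W₂) :
    ELL s t V₁ W₁ V₂ W₂ →ₗ[ℂ] ∀ k, V₁ k →ₗ[ℂ] V₂ k where
  toFun x k := betaMap eps R₁ R₂ x k
  map_add' x y := by
    funext k
    simp only [betaMap, Prod.fst_add, Prod.snd_add, Pi.add_apply, comp_add, add_comp,
      smul_add, Finset.sum_add_distrib]
    abel
  map_smul' c x := by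
    funext k
    simp only [betaMap, Prod.smul_fst, Prod.smul_snd, Pi.smul_apply, comp_add, add_comp,
      smul_comp, comp_smul, smul_add, Finset.sum_add_distrib, RingHom.id_apply,
      Finset.smul_sum, smul_comm c]

variable [Fintype Ω] [DecidableEq I] [DecidableEq Ω] (eps : Ω → ℂ)
  (R₁ : FramedRep s t V₁ W₁) (R₂ : FramedRep s t V₂ W₂)

lemma betaMap_singleJ (k₀ : I) (J : V₁ k₀ →ₗ[ℂ] W₂ k₀) (k : I) :
    betaMap eps R₁ R₂ (0, 0, 0, (Pi.single k₀ J : ∀ k, V₁ k →ₗ[ℂ] W₂ k)) k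
      = R₂.i k ∘ₗ (Pi.single k₀ J : ∀ k, V₁ k →ₗ[ℂ] W₂ k) k := by
  simp [betaMap]

lemma betaMap_singleI (k₀ : I) (Im : W₁ k₀ →ₗ[ℂ] V₂ k₀) (k : I) :
    betaMap eps R₁ R₂ (0, 0, (Pi.single k₀ Im : ∀ k, W₁ k →ₗ[ℂ] V₂ k), 0) k
      = (Pi.single k₀ Im : ∀ k, W₁ k →ₗ[ℂ] V₂ k) k ∘ₗ R₁.j k := by
  simp [betaMap]

lemma betaMap_singleCp (e₀ : Ω) (C : V₁ (s e₀) →ₗ[ℂ] V₂ (t e₀)) (k : I) :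
    betaMap eps R₁ R₂ ((Pi.single e₀ C : ∀ e, V₁ (s e) →ₗ[ℂ] V₂ (t e)), 0, 0, 0) k
      = (if h : t e₀ = k then
          eps e₀ • (lcast V₂ h ∘ₗ (C ∘ₗ R₁.Bm e₀) ∘ₗ lcast V₁ h.symm) else 0)
        + (if h : s e₀ = k then
          (-eps e₀) • (lcast V₂ h ∘ₗ (R₂.Bm e₀ ∘ₗ C) ∘ₗ lcast V₁ h.symm) else 0) := by
  have h1 := sum_subtype_dite (f := t) (M := V₁ k →ₗ[ℂ] V₂ k) k e₀
    (fun e h => eps e • (lcast V₂ h ∘ₗ ((Pi.single e₀ C : ∀ e, V₁ (s e) →ₗ[ℂ] V₂ (t e)) e ∘ₗ R₁.Bm e) ∘ₗ lcast V₁ h.symm))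
    (fun e h he => by simp [Pi.single_eq_of_ne he])
  have h2 := sum_subtype_dite (f := s) (M := V₁ k →ₗ[ℂ] V₂ k) k e₀
    (fun e h => (-eps e) • (lcast V₂ h ∘ₗ (R₂.Bm e ∘ₗ (Pi.single e₀ C : ∀ e, V₁ (s e) →ₗ[ℂ] V₂ (t e)) e) ∘ₗ lcast V₁ h.symm))
    (fun e h he => by simp [Pi.single_eq_of_ne he])
  simp only [betaMap, Pi.zero_apply, comp_zero, zero_comp, zero_add, add_zero]
  rw [h1, h2]
  simp [Pi.single_eq_same]

lemma betaMap_singleCm (e₀ : Ω) (C : V₁ (t e₀) →ₗ[ℂ] V₂ (s e₀)) (k : I) :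
    betaMap eps R₁ R₂ (0, (Pi.single e₀ C : ∀ e, V₁ (t e) →ₗ[ℂ] V₂ (s e)), 0, 0) k
      = (if h : t e₀ = k then
          eps e₀ • (lcast V₂ h ∘ₗ (R₂.Bp e₀ ∘ₗ C) ∘ₗ lcast V₁ h.symm) else 0)
        + (if h : s e₀ = k then
          (-eps e₀) • (lcast V₂ h ∘ₗ (C ∘ₗ R₁.Bp e₀) ∘ₗ lcast V₁ h.symm) else 0) := by
  have h1 := sum_subtype_dite (f := t) (M := V₁ k →ₗ[ℂ] V₂ k) k e₀
    (fun e h => eps e • (lcast V₂ h ∘ₗ (R₂.Bp e ∘ₗ (Pi.single e₀ C : ∀ e, V₁ (t e) →ₗ[ℂ] V₂ (s e)) e) ∘ₗ lcast V₁ h.symm))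
    (fun e h he => by simp [Pi.single_eq_of_ne he])
  have h2 := sum_subtype_dite (f := s) (M := V₁ k →ₗ[ℂ] V₂ k) k e₀
    (fun e h => (-eps e) • (lcast V₂ h ∘ₗ ((Pi.single e₀ C : ∀ e, V₁ (t e) →ₗ[ℂ] V₂ (s e)) e ∘ₗ R₁.Bp e) ∘ₗ lcast V₁ h.symm))
    (fun e h he => by simp [Pi.single_eq_of_ne he])
  simp only [betaMap, Pi.zero_apply, comp_zero, zero_comp, zero_add, add_zero]
  rw [h1, h2]
  simp [Pi.single_eq_same]

end betaLinear

/-- if `(B¹,i¹,j¹)` is stable then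
`β²¹ : E(V¹,V²) ⊕ L(W¹,V²) ⊕ L(V¹,W²) → L(V¹,V²)` is surjective. -/
theorem beta_surjective [Fintype I] [Fintype Ω] [DecidableEq I]
    {s t : Ω → I} (hloop : ∀ e, s e ≠ t e)
    (eps : Ω → ℂ) (heps : ∀ e, eps e ≠ 0)
    {V₁ W₁ V₂ W₂ : I → Type*}
    [∀ k, AddCommGroup (V₁ k)] [∀ k, Module ℂ (V₁ k)]
    [∀ k, FiniteDimensional ℂ (V₁ k)]
    [∀ k, AddCommGroup (W₁ k)] [∀ k, Module ℂ (W₁ k)]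
    [∀ k, FiniteDimensional ℂ (W₁ k)]
    [∀ k, AddCommGroup (V₂ k)] [∀ k, Module ℂ (V₂ k)]
    [∀ k, FiniteDimensional ℂ (V₂ k)]
    [∀ k, AddCommGroup (W₂ k)] [∀ k, Module ℂ (W₂ k)]
    [∀ k, FiniteDimensional ℂ (W₂ k)]
    (R₁ : FramedRep s t V₁ W₁) (R₂ : FramedRep s t V₂ W₂)
    (h₁ : R₁.IsStable) :
    ∀ D : ∀ k, V₁ k →ₗ[ℂ] V₂ k, ∃ x : ELL s t V₁ W₁ V₂ W₂,
      ∀ k, betaMap eps R₁ R₂ x k = D k := by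
  classical
  intro D
  by_contra hD
  have hD' : D ∉ LinearMap.range (betaLin eps R₁ R₂) := by
    rintro ⟨x, hx⟩
    exact hD ⟨x, fun k => congrFun hx k⟩
  set P := LinearMap.range (betaLin eps R₁ R₂) with hP
  have hQD : P.mkQ D ≠ 0 := by
    rw [Submodule.mkQ_apply, ne_eq, Submodule.Quotient.mk_eq_zero]
    exact hD'
  obtain ⟨ψ, hψ⟩ : ∃ ψ : Module.Dual ℂ ((∀ k, V₁ k →ₗ[ℂ] V₂ k) ⧸ P), ψ (P.mkQ D) ≠ 0 := by
    by_contra h; push_neg at h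
    exact hQD ((Module.forall_dual_apply_eq_zero_iff ℂ _).mp h)
  set φ : Module.Dual ℂ (∀ k, V₁ k →ₗ[ℂ] V₂ k) := ψ ∘ₗ P.mkQ with hφ
  -- trace representatives of the components of φ
  have hex : ∀ k, ∃ A : V₂ k →ₗ[ℂ] V₁ k, ∀ X : V₁ k →ₗ[ℂ] V₂ k,
      φ (Pi.single k X) = trace ℂ (V₁ k) (A ∘ₗ X) := by
    intro k
    obtain ⟨A, hA⟩ := exists_trace_rep (φ ∘ₗ LinearMap.single ℂ (fun k => V₁ k →ₗ[ℂ] V₂ k) k)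
    exact ⟨A, fun X => by simpa using hA X⟩
  choose ξ hξ using hex
  have key : ∀ D' : ∀ k, V₁ k →ₗ[ℂ] V₂ k, φ D' = ∑ k, trace ℂ (V₁ k) (ξ k ∘ₗ D' k) := by
    intro D'
    conv_lhs => rw [← Finset.univ_sum_single D']
    rw [map_sum]
    exact Finset.sum_congr rfl fun k _ => hξ k (D' k)
  -- φ kills the image of β
  have hβ : ∀ x : ELL s t V₁ W₁ V₂ W₂,
      (∑ k, trace ℂ (V₁ k) (ξ k ∘ₗ betaMap eps R₁ R₂ x k)) = 0 := by
    intro x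
    have h0 : φ (betaLin eps R₁ R₂ x) = 0 := by
      have : P.mkQ (betaLin eps R₁ R₂ x) = 0 := by
        rw [Submodule.mkQ_apply, Submodule.Quotient.mk_eq_zero]
        exact LinearMap.mem_range_self _ x
      simp only [hφ, LinearMap.comp_apply, this, map_zero]
    rw [key] at h0
    exact h0
  -- relation 1 : ξ ∘ i² = 0
  have rel1 : ∀ k, ξ k ∘ₗ R₂.i k = 0 := by
    intro k₀
    apply trace_null
    intro J
    have h0 := hβ (0, 0, 0, (Pi.single k₀ J : ∀ k, V₁ k →ₗ[ℂ] W₂ k))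
    rw [Finset.sum_eq_single k₀] at h0
    · rw [betaMap_singleJ eps R₁ R₂ k₀ J k₀, Pi.single_eq_same, ← LinearMap.comp_assoc] at h0
      exact h0
    · intro k _ hk
      rw [betaMap_singleJ eps R₁ R₂ k₀ J k, Pi.single_eq_of_ne hk]
      simp
    · intro h; exact absurd (Finset.mem_univ _) h
  -- relation 2 : j¹ ∘ ξ = 0
  have rel2 : ∀ k, R₁.j k ∘ₗ ξ k = 0 := by
    intro k₀
    apply trace_null
    intro X
    have h0 := hβ (0, 0, (Pi.single k₀ X : ∀ k, W₁ k →ₗ[ℂ] V₂ k), 0)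
    rw [Finset.sum_eq_single k₀] at h0
    · rw [betaMap_singleI eps R₁ R₂ k₀ X k₀, Pi.single_eq_same] at h0
      calc trace ℂ (W₁ k₀) ((R₁.j k₀ ∘ₗ ξ k₀) ∘ₗ X)
          = trace ℂ (W₁ k₀) (R₁.j k₀ ∘ₗ (ξ k₀ ∘ₗ X)) := by rw [LinearMap.comp_assoc]
        _ = trace ℂ (V₁ k₀) ((ξ k₀ ∘ₗ X) ∘ₗ R₁.j k₀) := trace_comp_comm' _ _
        _ = trace ℂ (V₁ k₀) (ξ k₀ ∘ₗ X ∘ₗ R₁.j k₀) := by rw [LinearMap.comp_assoc]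
        _ = 0 := h0
    · intro k _ hk
      rw [betaMap_singleI eps R₁ R₂ k₀ X k, Pi.single_eq_of_ne hk]
      simp
    · intro h; exact absurd (Finset.mem_univ _) h
  -- relations 3 and 4 : the edge relations
  have rel3 : ∀ e : Ω, R₁.Bm e ∘ₗ ξ (t e) = ξ (s e) ∘ₗ R₂.Bm e := by
    intro e₀
    rw [← sub_eq_zero]
    apply trace_null
    intro C
    have h0 := hβ ((Pi.single e₀ C : ∀ e, V₁ (s e) →ₗ[ℂ] V₂ (t e)), 0, 0, 0)
    have hsplit : ∀ k, trace ℂ (V₁ k)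
        (ξ k ∘ₗ betaMap eps R₁ R₂
          ((Pi.single e₀ C : ∀ e, V₁ (s e) →ₗ[ℂ] V₂ (t e)), 0, 0, 0) k)
        = trace ℂ (V₁ k) (ξ k ∘ₗ (if h : t e₀ = k then
            eps e₀ • (lcast V₂ h ∘ₗ (C ∘ₗ R₁.Bm e₀) ∘ₗ lcast V₁ h.symm) else 0))
          + trace ℂ (V₁ k) (ξ k ∘ₗ (if h : s e₀ = k then
            (-eps e₀) • (lcast V₂ h ∘ₗ (R₂.Bm e₀ ∘ₗ C) ∘ₗ lcast V₁ h.symm) else 0)) := by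
      intro k
      rw [betaMap_singleCp eps R₁ R₂ e₀ C k, comp_add, map_add]
    rw [Finset.sum_congr rfl (fun k _ => hsplit k), Finset.sum_add_distrib,
      Finset.sum_eq_single (t e₀), Finset.sum_eq_single (s e₀)] at h0
    · rw [dif_pos rfl, dif_pos rfl, lcast_rfl, lcast_rfl, lcast_rfl, lcast_rfl] at h0
      simp only [LinearMap.id_comp, LinearMap.comp_id, comp_smul, map_smul] at h0
      have h1 : eps e₀ * (trace ℂ (V₁ (t e₀)) (ξ (t e₀) ∘ₗ C ∘ₗ R₁.Bm e₀)
          - trace ℂ (V₁ (s e₀)) (ξ (s e₀) ∘ₗ R₂.Bm e₀ ∘ₗ C)) = 0 := by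
        rw [smul_eq_mul, neg_smul, smul_eq_mul] at h0
        linear_combination h0
      have h2 := mul_eq_zero.mp h1
      rcases h2 with h2 | h2
      · exact absurd h2 (heps e₀)
      rw [sub_eq_zero] at h2
      rw [sub_comp, map_sub, sub_eq_zero]
      calc trace ℂ (V₁ (s e₀)) ((R₁.Bm e₀ ∘ₗ ξ (t e₀)) ∘ₗ C)
          = trace ℂ (V₁ (s e₀)) (R₁.Bm e₀ ∘ₗ (ξ (t e₀) ∘ₗ C)) := by
            rw [LinearMap.comp_assoc]
        _ = trace ℂ (V₁ (t e₀)) ((ξ (t e₀) ∘ₗ C) ∘ₗ R₁.Bm e₀) := trace_comp_comm' _ _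
        _ = trace ℂ (V₁ (t e₀)) (ξ (t e₀) ∘ₗ C ∘ₗ R₁.Bm e₀) := by rw [LinearMap.comp_assoc]
        _ = trace ℂ (V₁ (s e₀)) (ξ (s e₀) ∘ₗ R₂.Bm e₀ ∘ₗ C) := h2
        _ = trace ℂ (V₁ (s e₀)) ((ξ (s e₀) ∘ₗ R₂.Bm e₀) ∘ₗ C) := by rw [LinearMap.comp_assoc]
    · intro k _ hk
      rw [dif_neg (fun h => hk h.symm)]
      simp
    · intro h; exact absurd (Finset.mem_univ _) h
    · intro k _ hk
      rw [dif_neg (fun h => hk h.symm)]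
      simp
    · intro h; exact absurd (Finset.mem_univ _) h
  have rel4 : ∀ e : Ω, ξ (t e) ∘ₗ R₂.Bp e = R₁.Bp e ∘ₗ ξ (s e) := by
    intro e₀
    rw [← sub_eq_zero]
    apply trace_null
    intro C
    have h0 := hβ (0, (Pi.single e₀ C : ∀ e, V₁ (t e) →ₗ[ℂ] V₂ (s e)), 0, 0)
    have hsplit : ∀ k, trace ℂ (V₁ k)
        (ξ k ∘ₗ betaMap eps R₁ R₂
          (0, (Pi.single e₀ C : ∀ e, V₁ (t e) →ₗ[ℂ] V₂ (s e)), 0, 0) k)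
        = trace ℂ (V₁ k) (ξ k ∘ₗ (if h : t e₀ = k then
            eps e₀ • (lcast V₂ h ∘ₗ (R₂.Bp e₀ ∘ₗ C) ∘ₗ lcast V₁ h.symm) else 0))
          + trace ℂ (V₁ k) (ξ k ∘ₗ (if h : s e₀ = k then
            (-eps e₀) • (lcast V₂ h ∘ₗ (C ∘ₗ R₁.Bp e₀) ∘ₗ lcast V₁ h.symm) else 0)) := by
      intro k
      rw [betaMap_singleCm eps R₁ R₂ e₀ C k, comp_add, map_add]
    rw [Finset.sum_congr rfl (fun k _ => hsplit k), Finset.sum_add_distrib,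
      Finset.sum_eq_single (t e₀), Finset.sum_eq_single (s e₀)] at h0
    · rw [dif_pos rfl, dif_pos rfl, lcast_rfl, lcast_rfl, lcast_rfl, lcast_rfl] at h0
      simp only [LinearMap.id_comp, LinearMap.comp_id, comp_smul, map_smul] at h0
      have h1 : eps e₀ * (trace ℂ (V₁ (t e₀)) (ξ (t e₀) ∘ₗ R₂.Bp e₀ ∘ₗ C)
          - trace ℂ (V₁ (s e₀)) (ξ (s e₀) ∘ₗ C ∘ₗ R₁.Bp e₀)) = 0 := by
        rw [smul_eq_mul, neg_smul, smul_eq_mul] at h0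
        linear_combination h0
      have h2 := mul_eq_zero.mp h1
      rcases h2 with h2 | h2
      · exact absurd h2 (heps e₀)
      rw [sub_eq_zero] at h2
      rw [sub_comp, map_sub, sub_eq_zero]
      calc trace ℂ (V₁ (t e₀)) ((ξ (t e₀) ∘ₗ R₂.Bp e₀) ∘ₗ C)
          = trace ℂ (V₁ (t e₀)) (ξ (t e₀) ∘ₗ R₂.Bp e₀ ∘ₗ C) := by rw [LinearMap.comp_assoc]
        _ = trace ℂ (V₁ (s e₀)) (ξ (s e₀) ∘ₗ C ∘ₗ R₁.Bp e₀) := h2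
        _ = trace ℂ (V₁ (s e₀)) ((ξ (s e₀) ∘ₗ C) ∘ₗ R₁.Bp e₀) := by rw [LinearMap.comp_assoc]
        _ = trace ℂ (V₁ (t e₀)) (R₁.Bp e₀ ∘ₗ (ξ (s e₀) ∘ₗ C)) := (trace_comp_comm' _ _).symm
        _ = trace ℂ (V₁ (t e₀)) ((R₁.Bp e₀ ∘ₗ ξ (s e₀)) ∘ₗ C) := by rw [LinearMap.comp_assoc]
    · intro k _ hk
      rw [dif_neg (fun h => hk h.symm)]
      simp
    · intro h; exact absurd (Finset.mem_univ _) h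
    · intro k _ hk
      rw [dif_neg (fun h => hk h.symm)]
      simp
    · intro h; exact absurd (Finset.mem_univ _) h
  -- stability forces ξ = 0
  have hξ0 : ∀ k, ξ k = 0 := by
    have hS := h₁ (fun k => LinearMap.range (ξ k))
      (by
        rintro e x ⟨y, rfl⟩
        exact ⟨R₂.Bp e y, (LinearMap.congr_fun (rel4 e) y).symm ▸ rfl⟩)
      (by
        rintro e x ⟨y, rfl⟩
        exact ⟨R₂.Bm e y, (LinearMap.congr_fun (rel3 e) y).symm⟩)
      (by
        rintro k x ⟨y, rfl⟩
        exact LinearMap.congr_fun (rel2 k) y)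
    intro k
    exact LinearMap.range_eq_bot.mp (hS k)
  have hfinal : φ D = 0 := by
    rw [key]
    apply Finset.sum_eq_zero
    intro k _
    rw [hξ0 k]
    simp
  exact hψ hfinal
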